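/- Let A be an integral domain and B a flat A-algebra. If there exists a nonzero a ∈ A such that the localization B_a is an integral domain, then B is an integral domain. -/

import Mathlib

/-- Let `A` be an integral domain and `B` a flat `A`-algebra. If there is a
nonzero `a ∈ A` such that the localization `B_a` is an integral domain, then `B` is an
integral domain. -/
theorem isDomain_of_flat_of_isDomain_localization_away
    (A B : Type*) [CommRing A] [IsDomain A] [CommRing B] [Algebra A B]
    [Module.Flat A B] (a : A) (ha : a ≠ 0)
    (h : IsDomain (Localization.Away (algebraMap A B a))) :
    IsDomain B := by
  -- multiplication by `a` on `B` is injective, by flatness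
  have hA : Function.Injective (LinearMap.lsmul A A a) := fun x y hxy => by
    simpa using mul_left_cancel₀ ha (by simpa using hxy)
  have hT : Function.Injective (LinearMap.rTensor B (LinearMap.lsmul A A a)) :=
    Module.Flat.rTensor_preserves_injective_linearMap _ hA
  have hsmul : Function.Injective (fun b : B => a • b) := by
    have : (fun b : B => a • b) =
        (TensorProduct.lid A B) ∘ (LinearMap.rTensor B (LinearMap.lsmul A A a)) ∘
          (TensorProduct.lid A B).symm := by
      ext b
      simp [TensorProduct.lid_symm_apply]
    rw [this]
    exact (TensorProduct.lid A B).injective.comp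
      (hT.comp (TensorProduct.lid A B).symm.injective)
  have hmem : algebraMap A B a ∈ nonZeroDivisors B := by
    rw [mem_nonZeroDivisors_iff_right]
    intro b hb
    have : a • b = 0 := by rw [Algebra.smul_def, mul_comm]; exact hb
    simpa using hsmul (by simpa using this)
  have hle : Submonoid.powers (algebraMap A B a) ≤ nonZeroDivisors B := by
    rintro x ⟨n, rfl⟩
    exact pow_mem hmem n
  have hinj : Function.Injective
      (algebraMap B (Localization.Away (algebraMap A B a))) :=
    IsLocalization.injective _ hle
  exact RingHom.injective_iff_ker_eq_bot (algebraMap B (Localization.Away (algebraMap A B a)))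
    |>.mpr (RingHom.ker_eq_bot_iff_eq_zero _ |>.mpr fun x hx => hinj (by simpa using hx))
    |> Function.Injective.isDomain _
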